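/- Let (X,d) be a quasi-metric space (T₁, forward topology normal). If whenever sequences (x_n),(y_n) satisfy x_n≠y_n for all n and (x_n) is forward parallel to (y_n), the sequence (x_n) has a cluster point, then (X,d) is a UC space. -/
import Mathlib


open Filter Topology Set

structure IsQuasiMetric {X : Type*} (d : X → X → ℝ) : Prop where
  nonneg : ∀ x y, 0 ≤ d x y
  refl : ∀ x, d x x = 0
  eq_of_both_zero : ∀ x y, d x y = 0 → d y x = 0 → x = y
  triangle : ∀ x y z, d x y ≤ d x z + d z y

/-- The forward topology generated by forward balls `B⁺(x,ε) = {y | d x y < ε}`. -/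
def forwardTopology {X : Type*} (d : X → X → ℝ) : TopologicalSpace X :=
  TopologicalSpace.generateFrom {S | ∃ x : X, ∃ ε : ℝ, 0 < ε ∧ S = {y | d x y < ε}}

/-- `s` forward converges to `x`: `d x (s n) → 0`. -/
def ForwardConv {X : Type*} (d : X → X → ℝ) (s : ℕ → X) (x : X) : Prop :=
  ∀ ε > (0:ℝ), ∃ N : ℕ, ∀ n ≥ N, d x (s n) < ε

/-- `s` backward converges to `x`: `d (s n) x → 0`. -/
def BackwardConv {X : Type*} (d : X → X → ℝ) (s : ℕ → X) (x : X) : Prop :=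
  ∀ ε > (0:ℝ), ∃ N : ℕ, ∀ n ≥ N, d (s n) x < ε

/-- `x` is a cluster point of `s`: some subsequence forward converges to `x`. -/
def IsClusterPointOf {X : Type*} (d : X → X → ℝ) (s : ℕ → X) (x : X) : Prop :=
  ∃ φ : ℕ → ℕ, StrictMono φ ∧ ForwardConv d (s ∘ φ) x

def LeftKCauchy {X : Type*} (d : X → X → ℝ) (s : ℕ → X) : Prop :=
  ∀ ε > (0:ℝ), ∃ n₀ : ℕ, ∀ k n : ℕ, n₀ ≤ k → k ≤ n → d (s k) (s n) < ε

/-- `s` is forward parallel to `t`. -/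
def ForwardParallel {X : Type*} (d : X → X → ℝ) (s t : ℕ → X) : Prop :=
  ∀ ε > (0:ℝ), ∃ N : ℕ, ∀ n ≥ N, d (s n) (t n) < ε

/-- Forward continuity for real-valued functions (ε-δ form). -/
def ForwardContinuous {X : Type*} (d : X → X → ℝ) (f : X → ℝ) : Prop :=
  ∀ x₀ : X, ∀ ε > (0:ℝ), ∃ δ > (0:ℝ), ∀ y, d x₀ y < δ → |f x₀ - f y| < ε

/-- Uniform continuity for real-valued functions. -/
def UniformlyCont {X : Type*} (d : X → X → ℝ) (f : X → ℝ) : Prop :=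
  ∀ ε > (0:ℝ), ∃ δ > (0:ℝ), ∀ x y, d x y < δ → |f x - f y| < ε

/-- `(X,d)` is a UC quasi-metric space. -/
def IsUC {X : Type*} (d : X → X → ℝ) : Prop :=
  ∀ f : X → ℝ, ForwardContinuous d f → UniformlyCont d f

/-- Distance between two sets: `inf {d a b | a ∈ A, b ∈ B}`. -/
noncomputable def setDist {X : Type*} (d : X → X → ℝ) (A B : Set X) : ℝ :=
  sInf {r : ℝ | ∃ a ∈ A, ∃ b ∈ B, d a b = r}

/-- if every pair of termwise-distinct forward parallel sequences has the first
sequence clustering, then `(X,d)` is UC. -/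
theorem isUC_of_parallel_cluster {X : Type*} (d : X → X → ℝ) (hd : IsQuasiMetric d)
    (hT1 : @T1Space X (forwardTopology d))
    (hN : @NormalSpace X (forwardTopology d))
    (h : ∀ s t : ℕ → X, (∀ n, s n ≠ t n) → ForwardParallel d s t →
      ∃ x : X, IsClusterPointOf d s x) :
    IsUC d := by
  intro f hf
  by_contra hnot
  unfold UniformlyCont at hnot
  push_neg at hnot
  obtain ⟨ε, hε, hεf⟩ := hnot
  have hch : ∀ n : ℕ, ∃ p : X × X, d p.1 p.2 < 1/(n+1) ∧ ε ≤ |f p.1 - f p.2| := by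
    intro n
    obtain ⟨x, y, h1, h2⟩ := hεf (1/(n+1)) (by positivity)
    exact ⟨(x, y), h1, h2⟩
  choose p hp1 hp2 using hch
  set s : ℕ → X := fun n => (p n).1 with hs
  set t : ℕ → X := fun n => (p n).2 with ht
  have hne : ∀ n, s n ≠ t n := by
    intro n heq
    have h2 := hp2 n
    rw [show (p n).1 = s n from rfl, show (p n).2 = t n from rfl, heq] at h2
    simp at h2
    linarith
  have hpar : ForwardParallel d s t := by
    intro δ hδ
    obtain ⟨N, hN⟩ := exists_nat_gt (1/δ)
    refine ⟨N, fun n hn => lt_of_lt_of_le (hp1 n) ?_⟩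
    rw [div_le_iff₀ (by positivity)]
    have : (1:ℝ)/δ < n + 1 := lt_of_lt_of_le hN (by exact_mod_cast Nat.le_succ_of_le hn)
    calc (1:ℝ) = δ * (1/δ) := by field_simp
    _ ≤ δ * (n+1) := by nlinarith
  obtain ⟨x, φ, hφ, hconv⟩ := h s t hne hpar
  obtain ⟨δ, hδ, hδf⟩ := hf x (ε/2) (by linarith)
  obtain ⟨N₁, hN₁⟩ := hconv (δ/2) (by linarith)
  obtain ⟨N₂, hN₂⟩ := exists_nat_gt (2/δ)
  set k := max N₁ N₂ with hk
  have hk1 : d x (s (φ k)) < δ/2 := hN₁ k (le_max_left _ _)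
  have hk2 : d (s (φ k)) (t (φ k)) < δ/2 := by
    refine lt_of_lt_of_le (hp1 (φ k)) ?_
    have hφk : (2:ℝ)/δ < φ k + 1 := by
      have : N₂ ≤ φ k := le_trans (le_max_right N₁ N₂) (hφ.le_apply)
      calc (2:ℝ)/δ < N₂ := hN₂
      _ ≤ φ k := by exact_mod_cast this
      _ ≤ φ k + 1 := by linarith
    rw [div_le_div_iff₀ (by positivity) (by norm_num)]
    calc (1:ℝ) * 2 = δ * (2/δ) := by field_simp
    _ ≤ δ * (φ k + 1) := by nlinarith
  have hxt : d x (t (φ k)) < δ :=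
    lt_of_le_of_lt (hd.triangle x (t (φ k)) (s (φ k))) (by linarith)
  have h1 := hδf (s (φ k)) (by linarith)
  have h2 := hδf (t (φ k)) hxt
  have h3 := hp2 (φ k)
  rw [show (p (φ k)).1 = s (φ k) from rfl, show (p (φ k)).2 = t (φ k) from rfl] at h3
  have htri : |f (s (φ k)) - f (t (φ k))| ≤ |f (s (φ k)) - f x| + |f x - f (t (φ k))| :=
    abs_sub_le _ _ _
  rw [abs_sub_comm (f (s (φ k))) (f x)] at htri
  linarith
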